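/- If each of b ≤ Δ specific items must all be removed, where the removal process consists of N' independent uniform picks (with replacement) among F individuals and removing all picked ones, and A ≥ 0, |F_1| ≥ N' + b, then the probability that all b items are picked at least once is at least ((N' - b + 1)/(e·F))^b, where F = |F_1| - A ≥ N'. -/

import Mathlib

open Finset

section Count
variable {N' b F : ℕ}

lemma compl_card (g : Fin b ↪ Fin N') (hbN : b ≤ N') :
    (univ.filter (fun s : Fin N' => ∀ t, g t ≠ s)).card = N' - b := by
  have h1 : (univ.filter (fun s : Fin N' => ∃ t, g t = s)) = univ.image g := by
    ext s; simp [eq_comm]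
  have h2 := Finset.card_filter_add_card_filter_not
    (s := (univ : Finset (Fin N'))) (p := fun s : Fin N' => ∃ t, g t = s)
  rw [h1, Finset.card_image_of_injective _ g.injective] at h2
  have h3 : (univ.filter (fun s : Fin N' => ¬ ∃ t, g t = s))
      = (univ.filter (fun s : Fin N' => ∀ t, g t ≠ s)) := by
    ext s; simp
  rw [h3] at h2
  simp only [Finset.card_univ, Fintype.card_fin] at h2 ⊢
  omega

lemma count_lower (hb : 1 ≤ b) (hbN : b ≤ N') (hNF : N' ≤ F) :
    N'.descFactorial b * (F - b) ^ (N' - b) ≤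
      (Finset.univ.filter
          (fun ω : Fin N' → Fin F => ∀ t : Fin F, (t : ℕ) < b → ∃ s, ω s = t)).card := by
  classical
  have hbF : b ≤ F := hbN.trans hNF
  have hFb : b + (F - b) = F := by omega
  set φ : ((Fin b ↪ Fin N') × (Fin (N' - b) → Fin (F - b))) → (Fin N' → Fin F) := fun p s =>
    if hs : ∃ t, p.1 t = s then Fin.castLE hbF hs.choose
    else Fin.cast hFb (Fin.natAdd b (p.2 ((Finset.orderIsoOfFin
      (univ.filter (fun s : Fin N' => ∀ t, p.1 t ≠ s)) (compl_card p.1 hbN)).symm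
      ⟨s, by simpa using (not_exists.mp hs)⟩))) with hφ
  have fact1 : ∀ p (t : Fin b), φ p (p.1 t) = Fin.castLE hbF t := by
    intro p t
    have hs : ∃ t', p.1 t' = p.1 t := ⟨t, rfl⟩
    simp only [hφ, dif_pos hs]
    congr 1
    exact p.1.injective hs.choose_spec
  have fact2 : ∀ p (s : Fin N') (hs : ¬ ∃ t, p.1 t = s),
      (φ p s : ℕ) = b + (p.2 ((Finset.orderIsoOfFin
        (univ.filter (fun s : Fin N' => ∀ t, p.1 t ≠ s)) (compl_card p.1 hbN)).symm
        ⟨s, by simpa using (not_exists.mp hs)⟩) : ℕ) := by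
    intro p s hs
    simp only [hφ, dif_neg hs]
    rfl
  have hmaps : ∀ p ∈ (univ : Finset ((Fin b ↪ Fin N') × (Fin (N' - b) → Fin (F - b)))),
      φ p ∈ Finset.univ.filter
      (fun ω : Fin N' → Fin F => ∀ t : Fin F, (t : ℕ) < b → ∃ s, ω s = t) := by
    intro p _
    simp only [mem_filter, mem_univ, true_and]
    intro t ht
    refine ⟨p.1 ⟨t, ht⟩, ?_⟩
    rw [fact1]
    ext
    simp
  have hinj : Set.InjOn φ (univ : Finset ((Fin b ↪ Fin N') × (Fin (N' - b) → Fin (F - b)))) := by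
    rintro ⟨g, h⟩ - ⟨g', h'⟩ - heq
    have hg : g = g' := by
      ext t
      have h1 : φ (g, h) (g' t) = Fin.castLE hbF t := by
        rw [heq]; exact fact1 (g', h') t
      by_cases hs : ∃ t', g t' = g' t
      · obtain ⟨t', ht'⟩ := hs
        have h2 : Fin.castLE hbF t = Fin.castLE hbF t' := by
          rw [← h1, ← ht']; exact fact1 (g, h) t'
        have h4 : t = t' := by
          have := congrArg Fin.val h2
          simpa [Fin.ext_iff] using this
        conv_lhs => rw [h4]
        exact congrArg Fin.val ht'
      · exfalso
        have h2 := fact2 (g, h) (g' t) hs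
        rw [h1] at h2
        simp only [Fin.coe_castLE] at h2
        omega
    subst hg
    have hh : h = h' := by
      funext i
      set e := Finset.orderIsoOfFin (univ.filter (fun s : Fin N' => ∀ t, g t ≠ s))
        (compl_card g hbN) with he
      set s : Fin N' := (e i : Fin N') with hsdef
      have hsmem : s ∈ univ.filter (fun s : Fin N' => ∀ t, g t ≠ s) := (e i).2
      have hs : ¬ ∃ t, g t = s := by
        simp only [mem_filter, mem_univ, true_and] at hsmem
        push_neg
        exact hsmem
      have hsymm : e.symm ⟨s, hsmem⟩ = i := by
        have : (⟨s, hsmem⟩ : {x // x ∈ _}) = e i := Subtype.ext rfl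
        rw [this, OrderIso.symm_apply_apply]
      have h2 := fact2 (g, h) s hs
      have h3 := fact2 (g, h') s hs
      rw [heq] at h2
      rw [h3] at h2
      simp only [← he, hsymm] at h2
      ext
      omega
    rw [hh]
  have hcard := Finset.card_le_card_of_injOn φ hmaps hinj
  have hc2 : (univ : Finset ((Fin b ↪ Fin N') × (Fin (N' - b) → Fin (F - b)))).card
      = N'.descFactorial b * (F - b) ^ (N' - b) := by
    rw [Finset.card_univ, Fintype.card_prod, Fintype.card_embedding_eq, Fintype.card_fun]
    simp
  rw [← hc2]
  exact hcard

end Count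

lemma key1 {N' b F : ℕ} (hb : 1 ≤ b) (hbN : b ≤ N') (hNF : N' ≤ F) :
    (Real.exp 1)⁻¹ ^ b ≤ (((F - b : ℕ) : ℝ) / F) ^ (N' - b) := by
  have hbF : b ≤ F := hbN.trans hNF
  have hF0 : (0:ℝ) < F := by
    have : 0 < F := by omega
    exact_mod_cast this
  have hcast : ((F - b : ℕ) : ℝ) = (F:ℝ) - b := by
    rw [Nat.cast_sub hbF]
  have hexp : (Real.exp 1)⁻¹ ^ b = Real.exp (-(b:ℝ)) := by
    rw [← Real.exp_neg, ← Real.exp_nat_mul]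
    ring_nf
  rw [hexp, hcast]
  rcases eq_or_lt_of_le hbF with hbFe | hbFlt
  · have hN : N' - b = 0 := by omega
    rw [hN, pow_zero]
    exact Real.exp_le_one_iff.mpr (by simp)
  · have hFb0 : (0:ℝ) < (F:ℝ) - b := by
      have : (b:ℝ) < F := by exact_mod_cast hbFlt
      linarith
    set x : ℝ := b / ((F:ℝ) - b) with hx
    have hx0 : 0 < x := by positivity
    have h1 : (F:ℝ) / ((F:ℝ) - b) ≤ Real.exp x := by
      have := Real.add_one_le_exp x
      have hsum : (F:ℝ) / ((F:ℝ) - b) = x + 1 := by rw [hx]; field_simp; ring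
      linarith
    have h2 : Real.exp (-x) ≤ ((F:ℝ) - b) / F := by
      rw [Real.exp_neg]
      calc (Real.exp x)⁻¹ ≤ ((F:ℝ) / ((F:ℝ) - b))⁻¹ :=
            inv_anti₀ (by positivity) h1
        _ = ((F:ℝ) - b) / F := by rw [inv_div]
    have h3 : Real.exp (-(b:ℝ)) = Real.exp (-x) ^ (F - b) := by
      rw [← Real.exp_nat_mul]
      congr 1
      rw [Nat.cast_sub hbF, hx]
      field_simp
    calc Real.exp (-(b:ℝ)) = Real.exp (-x) ^ (F - b) := h3
      _ ≤ (((F:ℝ) - b) / F) ^ (F - b) :=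
          pow_le_pow_left₀ (Real.exp_pos _).le h2 _
      _ ≤ (((F:ℝ) - b) / F) ^ (N' - b) := by
          apply pow_le_pow_of_le_one (by positivity) _ (by omega)
          rw [div_le_one hF0]
          linarith

/-- if `N'` picks are made independently and uniformly at random (with
replacement) from a set of `F` individuals containing `b` distinguished items
(`1 ≤ b ≤ N' ≤ F`), then the probability that every distinguished item is picked at
least once is at least `((N' - b + 1)/(e·F))^b`. -/
theorem stmt4 (N' b F : ℕ) (hb : 1 ≤ b) (hbN : b ≤ N') (hNF : N' ≤ F) :
    (((N' : ℝ) - b + 1) / (Real.exp 1 * F)) ^ b ≤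
      ((Finset.univ.filter
          (fun ω : Fin N' → Fin F => ∀ t : Fin F, (t : ℕ) < b → ∃ s, ω s = t)).card : ℝ)
        / (F : ℝ) ^ N' := by
  have hbF : b ≤ F := hbN.trans hNF
  have hF0 : (0:ℝ) < F := by
    have : 0 < F := by omega
    exact_mod_cast this
  have hD : ((N' + 1 - b : ℕ) : ℝ) = (N' : ℝ) - b + 1 := by
    rw [Nat.cast_sub (by omega)]
    push_cast
    ring
  have hsplit : ((F:ℝ)) ^ N' = (F:ℝ) ^ b * (F:ℝ) ^ (N' - b) := by
    rw [← pow_add]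
    congr 1
    omega
  have hkey := key1 hb hbN hNF
  have hdesc : ((N' + 1 - b : ℕ) : ℝ) ^ b ≤ (N'.descFactorial b : ℝ) := by
    exact_mod_cast Nat.pow_sub_le_descFactorial N' b
  have hcount : ((N'.descFactorial b * (F - b) ^ (N' - b) : ℕ) : ℝ) ≤
      ((Finset.univ.filter
          (fun ω : Fin N' → Fin F => ∀ t : Fin F, (t : ℕ) < b → ∃ s, ω s = t)).card : ℝ) :=
    Nat.cast_le.mpr (count_lower hb hbN hNF)
  calc (((N' : ℝ) - b + 1) / (Real.exp 1 * F)) ^ b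
      = ((N' + 1 - b : ℕ) : ℝ) ^ b * ((Real.exp 1)⁻¹ ^ b * ((F:ℝ)⁻¹) ^ b) := by
        rw [hD, div_pow, mul_pow, inv_pow, inv_pow, div_eq_mul_inv, mul_inv]
    _ ≤ ((N' + 1 - b : ℕ) : ℝ) ^ b * ((((F - b : ℕ) : ℝ) / F) ^ (N' - b) * ((F:ℝ)⁻¹) ^ b) := by
        gcongr
    _ = ((N' + 1 - b : ℕ) : ℝ) ^ b * ((F - b : ℕ) : ℝ) ^ (N' - b) / (F:ℝ) ^ N' := by
        rw [hsplit, div_pow]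
        field_simp
        rw [one_div, inv_pow, inv_mul_cancel_right₀ (pow_ne_zero _ hF0.ne')]
    _ ≤ ((N'.descFactorial b * (F - b) ^ (N' - b) : ℕ) : ℝ) / (F:ℝ) ^ N' := by
        apply div_le_div_of_nonneg_right ?_ (by positivity : (0:ℝ) ≤ (F:ℝ) ^ N')
        push_cast
        gcongr
    _ ≤ _ := by gcongr
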